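/- Let X be a compact metric space, (B, F, P) a self-similar brick (B the attractor of the IFS F on B, P(B) ∪ B = X, C := P(B)). Suppose for every f ∈ F there is a continuous surjection φ_f: X → f(B), Lipschitz on B and constant on C. Then there exist finite families F' of continuous maps X → B (Lipschitz on B, constant on C, with F'(X) = B and each having Lipschitz constant < 1 on B) and P' of continuous maps X → C (constant on C, with P'(X) = C); namely F' = {g∘φ_f : g ∈ F^k, f ∈ F} for suitable k and P' = {p∘φ_f : p ∈ P, f ∈ F}. -/

import Mathlib

open Set

/-- Composition of a list of self-maps. -/
def Comp {X : Type*} (l : List (X → X)) : X → X := l.foldr (· ∘ ·) id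

lemma Comp_nil {X : Type*} : Comp ([] : List (X → X)) = id := rfl

lemma Comp_cons {X : Type*} (g : X → X) (l : List (X → X)) :
    Comp (g :: l) = g ∘ Comp l := rfl

lemma lipschitzOnWith_weaken {X : Type*} [MetricSpace X] {K K' : NNReal} {f : X → X}
    {s : Set X} (hf : LipschitzOnWith K f s) (h : K ≤ K') : LipschitzOnWith K' f s :=
  fun x hx y hy => (hf hx hy).trans (mul_le_mul_of_nonneg_right (ENNReal.coe_le_coe.2 h) (zero_le))

/-- Lists of given length with entries in a finite set form a finite set. -/
lemma finite_lists {α : Type*} {s : Set α} (hs : s.Finite) :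
    ∀ k : ℕ, {l : List α | l.length = k ∧ ∀ x ∈ l, x ∈ s}.Finite := by
  intro k
  induction k with
  | zero =>
    apply Set.Finite.subset (Set.finite_singleton ([] : List α))
    rintro l ⟨hl, -⟩
    simp [List.length_eq_zero_iff.mp hl]
  | succ k ih =>
    apply Set.Finite.subset (((hs.prod ih).image (fun p : α × List α => p.1 :: p.2)))
    rintro l ⟨hl, hmem⟩
    match l, hl with
    | a :: t, hl =>
      refine ⟨(a, t), ⟨hmem a (by simp), ?_, ?_⟩, rfl⟩
      · simpa using hl
      · exact fun x hx => hmem x (by simp [hx])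

theorem stmt16 {X : Type*} [MetricSpace X] [CompactSpace X]
    (B : Set X) (hB : IsClosed B) (F P : Set (X → X))
    (hFfin : F.Finite)
    (hFcontr : ∀ f ∈ F, f '' B ⊆ B ∧ ∃ K : NNReal, K < 1 ∧ LipschitzOnWith K f B)
    (hattr : (⋃ f ∈ F, f '' B) = B)
    (hPfin : P.Finite) (hPcont : ∀ p ∈ P, ContinuousOn p B)
    (hbrick : (⋃ p ∈ P, p '' B) ∪ B = Set.univ)
    (C : Set X) (hC : C = ⋃ p ∈ P, p '' B)
    (φ : (X → X) → (X → X))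
    (hφ : ∀ f ∈ F, Continuous (φ f) ∧ Set.range (φ f) = f '' B ∧
      (∃ K : NNReal, LipschitzOnWith K (φ f) B) ∧ ∃ c : X, ∀ x ∈ C, φ f x = c) :
    ∃ k : ℕ,
      (let F' : Set (X → X) :=
        {h | ∃ (l : List (X → X)) (f : X → X), l.length = k ∧ (∀ g ∈ l, g ∈ F) ∧
          f ∈ F ∧ h = Comp l ∘ φ f};
       F'.Finite ∧
       (∀ g ∈ F', Continuous g ∧ Set.range g ⊆ B ∧
          (∃ K : NNReal, K < 1 ∧ LipschitzOnWith K g B) ∧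
          ∃ c : X, ∀ x ∈ C, g x = c) ∧
       (⋃ g ∈ F', Set.range g) = B) ∧
      (let P' : Set (X → X) := {h | ∃ p ∈ P, ∃ f ∈ F, h = p ∘ φ f};
       P'.Finite ∧
       (∀ q ∈ P', Continuous q ∧ Set.range q ⊆ C ∧ ∃ c : X, ∀ x ∈ C, q x = c) ∧
       (⋃ q ∈ P', Set.range q) = C) := by
  classical
  -- choose contraction constants for elements of F
  choose hmaps K1 hK1lt hK1 using hFcontr
  -- choose data for φ
  choose hφc hφr hφlip cst hφconst using hφ
  choose K2 hK2 using hφlip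
  -- a uniform contraction constant c < 1
  obtain ⟨c, hc1, hcle⟩ : ∃ c : NNReal, c < 1 ∧ ∀ f (hf : f ∈ F), K1 f hf ≤ c := by
    by_cases hne : F.Nonempty
    · obtain ⟨c, hcF, hcmax⟩ := hFfin.exists_maximalFor (fun f => if h : f ∈ F then K1 f h else 0)
        F hne
      refine ⟨if h : c ∈ F then K1 c h else 0, ?_, ?_⟩
      · simp only [hcF, dif_pos]; exact hK1lt c hcF
      · intro f hf
        rcases le_or_gt (if h : f ∈ F then K1 f h else 0) (if h : c ∈ F then K1 c h else 0) with
          h | h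
        · simpa [hf] using h
        · have := hcmax hf h.le
          simp only [hf, dif_pos] at this ⊢
          exact this
    · exact ⟨0, by norm_num, fun f hf => absurd ⟨f, hf⟩ hne⟩
  -- a uniform Lipschitz constant for the φ's, positive
  obtain ⟨M, hM0, hMle⟩ : ∃ M : NNReal, 0 < M ∧ ∀ f (hf : f ∈ F), K2 f hf ≤ M := by
    by_cases hne : F.Nonempty
    · obtain ⟨m, hmF, hmmax⟩ := hFfin.exists_maximalFor (fun f => if h : f ∈ F then K2 f h else 0)
        F hne
      refine ⟨(if h : m ∈ F then K2 m h else 0) + 1, by positivity, ?_⟩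
      intro f hf
      rcases le_or_gt (if h : f ∈ F then K2 f h else 0) (if h : m ∈ F then K2 m h else 0) with
        h | h
      · calc K2 f hf = if h : f ∈ F then K2 f h else 0 := by simp [hf]
          _ ≤ _ := le_add_of_le_of_nonneg h (zero_le)
      · have := hmmax hf h.le
        simp only [hf, dif_pos] at this ⊢
        exact le_add_of_le_of_nonneg this (zero_le)
    · exact ⟨1, one_pos, fun f hf => absurd ⟨f, hf⟩ hne⟩
  -- choose k with c ^ k * M < 1
  obtain ⟨k, hk⟩ : ∃ k : ℕ, c ^ k * M < 1 := by
    obtain ⟨k, hk⟩ := exists_pow_lt_of_lt_one (inv_pos.mpr hM0) hc1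
    refine ⟨k, ?_⟩
    calc c ^ k * M < M⁻¹ * M := by
          exact mul_lt_mul_of_pos_right hk hM0
      _ = 1 := inv_mul_cancel₀ hM0.ne'
  refine ⟨k, ?_, ?_⟩
  · -- the F' part
    intro F'
    -- basic facts about compositions of lists from F
    have hcomp : ∀ l : List (X → X), (∀ g ∈ l, g ∈ F) →
        MapsTo (Comp l) B B ∧ LipschitzOnWith (c ^ l.length) (Comp l) B := by
      intro l
      induction l with
      | nil =>
        intro _
        exact ⟨mapsTo_id B, by simpa [Comp_nil] using LipschitzWith.id.lipschitzOnWith (s := B)⟩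
      | cons g t ih =>
        intro hmem
        have hgF : g ∈ F := hmem g (by simp)
        obtain ⟨ht1, ht2⟩ := ih (fun x hx => hmem x (by simp [hx]))
        have hgB : MapsTo g B B := fun x hx => hmaps g hgF ⟨x, hx, rfl⟩
        constructor
        · rw [Comp_cons]; exact hgB.comp ht1
        · rw [Comp_cons, List.length_cons, pow_succ']
          exact (lipschitzOnWith_weaken (hK1 g hgF) (hcle g hgF)).comp ht2 ht1
    constructor
    · -- finiteness
      have : F' ⊆ (fun p : List (X → X) × (X → X) => Comp p.1 ∘ φ p.2) ''
          ({l | l.length = k ∧ ∀ x ∈ l, x ∈ F} ×ˢ F) := by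
        rintro h ⟨l, f, hlen, hmem, hfF, rfl⟩
        exact ⟨(l, f), ⟨⟨hlen, hmem⟩, hfF⟩, rfl⟩
      exact (((finite_lists hFfin k).prod hFfin).image _).subset this
    constructor
    · -- properties of each g ∈ F'
      rintro g ⟨l, f, hlen, hmem, hfF, rfl⟩
      obtain ⟨hl1, hl2⟩ := hcomp l hmem
      have hφB : ∀ x, φ f x ∈ B := fun x => by
        have : φ f x ∈ Set.range (φ f) := ⟨x, rfl⟩
        rw [hφr f hfF] at this
        exact hmaps f hfF this
      refine ⟨?_, ?_, ?_, ?_⟩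
      · exact (hl2.continuousOn).comp_continuous (hφc f hfF) hφB
      · rintro y ⟨x, rfl⟩
        exact hl1 (hφB x)
      · refine ⟨c ^ k * M, hk, ?_⟩
        have := (hl2.comp (lipschitzOnWith_weaken (hK2 f hfF) (hMle f hfF))
          (fun x _ => hφB x))
        rwa [hlen] at this
      · exact ⟨Comp l (cst f hfF), fun x hx => by
          simp [Function.comp, hφconst f hfF x hx]⟩
    · -- covering: ⋃ ranges = B
      -- first: ⋃ over lists of length k of Comp l '' B = B
      have hcover : ∀ n : ℕ,
          (⋃ l ∈ {l : List (X → X) | l.length = n ∧ ∀ x ∈ l, x ∈ F}, Comp l '' B) = B := by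
        intro n
        induction n with
        | zero =>
          apply subset_antisymm
          · simp only [Set.iUnion_subset_iff]
            rintro l ⟨hl, -⟩
            rw [List.length_eq_zero_iff.mp hl]
            simp [Comp_nil]
          · intro x hx
            exact Set.mem_iUnion₂.mpr ⟨[], by simp, by simpa [Comp_nil]⟩
        | succ n ih =>
          apply subset_antisymm
          · simp only [Set.iUnion_subset_iff]
            rintro l ⟨hl, hmem⟩
            rintro y ⟨x, hx, rfl⟩
            exact (hcomp l hmem).1 hx
          · intro x hx
            rw [← hattr] at hx
            obtain ⟨f, hfF, z, hz, rfl⟩ := by simpa using hx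
            rw [← ih] at hz
            obtain ⟨l, ⟨hl, hmem⟩, w, hw, rfl⟩ := by simpa using hz
            refine Set.mem_iUnion₂.mpr ⟨f :: l, ⟨by simp [hl], ?_⟩, ⟨w, hw, by simp [Comp_cons]⟩⟩
            intro g hg
            rcases List.mem_cons.mp hg with h | h
            · rw [h]; exact hfF
            · exact hmem g h
      apply subset_antisymm
      · simp only [Set.iUnion_subset_iff]
        rintro g ⟨l, f, hlen, hmem, hfF, rfl⟩
        rintro y ⟨x, rfl⟩
        have hφB : (Comp l ∘ φ f) x ∈ B := by
          apply (hcomp l hmem).1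
          have : φ f x ∈ Set.range (φ f) := ⟨x, rfl⟩
          rw [hφr f hfF] at this
          exact hmaps f hfF this
        exact hφB
      · intro x hx
        rw [← hcover k] at hx
        obtain ⟨l, ⟨hl, hmem⟩, z, hz, rfl⟩ := by simpa using hx
        rw [← hattr] at hz
        obtain ⟨f, hfF, w, hw, rfl⟩ := by simpa using hz
        have : f w ∈ Set.range (φ f) := by
          rw [hφr f hfF]; exact ⟨w, hw, rfl⟩
        obtain ⟨u, hu⟩ := this
        refine Set.mem_iUnion₂.mpr ⟨Comp l ∘ φ f, ⟨l, f, hl, hmem, hfF, rfl⟩, ⟨u, ?_⟩⟩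
        simp [Function.comp, hu]
  · -- the P' part
    intro P'
    constructor
    · have : P' ⊆ (fun p : (X → X) × (X → X) => p.1 ∘ φ p.2) '' (P ×ˢ F) := by
        rintro h ⟨p, hp, f, hf, rfl⟩
        exact ⟨(p, f), ⟨hp, hf⟩, rfl⟩
      exact ((hPfin.prod hFfin).image _).subset this
    constructor
    · rintro q ⟨p, hpP, f, hfF, rfl⟩
      have hφB : ∀ x, φ f x ∈ B := fun x => by
        have : φ f x ∈ Set.range (φ f) := ⟨x, rfl⟩
        rw [hφr f hfF] at this
        exact hmaps f hfF this
      refine ⟨(hPcont p hpP).comp_continuous (hφc f hfF) hφB, ?_, ?_⟩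
      · rintro y ⟨x, rfl⟩
        rw [hC]
        exact Set.mem_biUnion hpP ⟨φ f x, hφB x, rfl⟩
      · exact ⟨p (cst f hfF), fun x hx => by
          simp [Function.comp, hφconst f hfF x hx]⟩
    · apply subset_antisymm
      · simp only [Set.iUnion_subset_iff]
        rintro q ⟨p, hpP, f, hfF, rfl⟩
        rintro y ⟨x, rfl⟩
        have hφB : φ f x ∈ B := by
          have : φ f x ∈ Set.range (φ f) := ⟨x, rfl⟩
          rw [hφr f hfF] at this
          exact hmaps f hfF this
        rw [hC]
        exact Set.mem_biUnion hpP ⟨φ f x, hφB, rfl⟩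
      · intro x hx
        rw [hC] at hx
        obtain ⟨p, hpP, z, hz, rfl⟩ := by simpa using hx
        rw [← hattr] at hz
        obtain ⟨f, hfF, w, hw, rfl⟩ := by simpa using hz
        have : f w ∈ Set.range (φ f) := by
          rw [hφr f hfF]; exact ⟨w, hw, rfl⟩
        obtain ⟨u, hu⟩ := this
        refine Set.mem_iUnion₂.mpr ⟨p ∘ φ f, ⟨p, hpP, f, hfF, rfl⟩, ⟨u, ?_⟩⟩
        simp [Function.comp, hu]
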